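/- arXiv:1407.5259 — 2 statements merged into one kernel-verified Lean document; each statement's English description precedes it below -/
import Mathlib

section
/- Let A be a Fréchet algebra and U a countably incomplete ultrafilter on I. If the ultrapower (A)_U has an identity element, then A has an identity element. -/
open Filter Topology

noncomputable section

/-- The limit of a real-valued family along an ultrafilter. -/
noncomputable def limU {I : Type*} (U : Ultrafilter I) (f : I → ℝ) : ℝ :=
  limUnder (U : Filter I) f

/-- A Fréchet space structure presented by an increasing, separating sequence of seminorms,
with completeness with respect to this family. -/
structure FrechetSp (E : Type*) [AddCommGroup E] [Module ℂ E] where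
  P : ℕ → Seminorm ℂ E
  mono : ∀ (n : ℕ) (x : E), P n x ≤ P (n + 1) x
  sep : ∀ x : E, (∀ n, P n x = 0) → x = 0
  complete : ∀ x : ℕ → E,
    (∀ n : ℕ, ∀ ε : ℝ, 0 < ε → ∃ N, ∀ j k, N ≤ j → N ≤ k → P n (x j - x k) < ε) →
    ∃ L : E, ∀ n, Filter.Tendsto (fun j => P n (x j - L)) Filter.atTop (nhds 0)

/-- A Fréchet algebra: a Fréchet space whose seminorms are submultiplicative. -/
structure FrechetAlg (A : Type*) [NonUnitalRing A] [Module ℂ A] extends FrechetSp A where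
  submul : ∀ (n : ℕ) (x y : A), P n (x * y) ≤ P n x * P n y

/-- `ℓ∞(I,E)`: the families that are bounded with respect to every seminorm. -/
def linfSet {E : Type*} [AddCommGroup E] [Module ℂ E] (FE : FrechetSp E) (I : Type*) :
    Set (I → E) :=
  {x | ∀ n : ℕ, BddAbove (Set.range fun i => FE.P n (x i))}

/-- The families whose seminorms tend to `0` along the ultrafilter `U`. -/
def nullSet {E : Type*} [AddCommGroup E] [Module ℂ E] {I : Type*} (FE : FrechetSp E)
    (U : Ultrafilter I) : Set (I → E) :=
  {x | ∀ n : ℕ, Filter.Tendsto (fun i => FE.P n (x i)) (U : Filter I) (nhds 0)}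

/-- The sup-seminorm `Q_n` on `ℓ∞(I,E)`. -/
noncomputable def supSem {E : Type*} [AddCommGroup E] [Module ℂ E] {I : Type*}
    (FE : FrechetSp E) (n : ℕ) (x : I → E) : ℝ :=
  sSup (Set.range fun i => FE.P n (x i))

/-- A countably incomplete ultrafilter. -/
def CountablyIncomplete {I : Type*} (U : Ultrafilter I) : Prop :=
  ∃ V : ℕ → Set I, (∀ n, V n ∈ U) ∧ (∀ n, V (n + 1) ⊆ V n) ∧ (⋂ n, V n) = ∅

/-- Keisler's `κ`-good ultrafilters. -/
def IsGoodUltrafilter {I : Type u} (κ : Cardinal.{u}) (U : Ultrafilter I) : Prop :=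
  ∀ (β : Type u) [DecidableEq β], Cardinal.mk β ≤ κ →
    ∀ f : Finset β → Set I, (∀ u, f u ∈ U) → (∀ u w : Finset β, u ⊆ w → f w ⊆ f u) →
      ∃ g : Finset β → Set I, (∀ u, g u ∈ U) ∧ (∀ u w : Finset β, g (u ∪ w) = g u ∩ g w) ∧
        ∀ u, g u ⊆ f u

/-- A set bounded with respect to every seminorm of the family. -/
def IsBddSet {E : Type*} [AddCommGroup E] [Module ℂ E] (FE : FrechetSp E) (B : Set E) : Prop :=
  ∀ n : ℕ, BddAbove ((FE.P n) '' B)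

/-- `ℵ(E) = max(ℵ_U(E), ℵ_B(E))`; for a metrizable space `ℵ_U(E) = ℵ₀`, and `ℵ_B(E)` is the
least cardinality of a fundamental family of bounded sets. -/
noncomputable def alephE {E : Type u} [AddCommGroup E] [Module ℂ E] (FE : FrechetSp E) :
    Cardinal.{u} :=
  max Cardinal.aleph0
    (sInf {c : Cardinal.{u} | ∃ S : Set (Set E), Cardinal.mk ↥S = c ∧ (∀ B ∈ S, IsBddSet FE B) ∧
      ∀ B : Set E, IsBddSet FE B → ∃ D ∈ S, B ⊆ D})

/-- An abstract presentation of the ultrapower `(E)_U = ℓ∞(I,E)/N_U` of a Fréchet space: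
a quotient map `π` defined on bounded families, linear there, with
`P'_n(π x) = lim_U P_n(x_i)` and kernel `N_U`. -/
structure Ultrapower {I : Type*} (U : Ultrafilter I) {E EU : Type*}
    [AddCommGroup E] [Module ℂ E] [AddCommGroup EU] [Module ℂ EU]
    (FE : FrechetSp E) (FEU : FrechetSp EU) where
  π : (I → E) → EU
  surj : ∀ z : EU, ∃ x ∈ linfSet FE I, π x = z
  map_add : ∀ x y : I → E, x ∈ linfSet FE I → y ∈ linfSet FE I → π (x + y) = π x + π y
  map_smul : ∀ (c : ℂ) (x : I → E), x ∈ linfSet FE I → π (c • x) = c • π x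
  norm_eq : ∀ x ∈ linfSet FE I, ∀ n, FEU.P n (π x) = limU U fun i => FE.P n (x i)
  zero_class : ∀ x ∈ linfSet FE I, (π x = 0 ↔ x ∈ nullSet FE U)

/-- An abstract presentation of the completed projective tensor product `G = E ⊗̂ F`:
a bilinear map whose finite sums are dense and on which each seminorm of `G` is
the projective tensor seminorm. -/
structure ProjTensor {E F G : Type*} [AddCommGroup E] [Module ℂ E] [AddCommGroup F] [Module ℂ F]
    [AddCommGroup G] [Module ℂ G] (FE : FrechetSp E) (FF : FrechetSp F) (FG : FrechetSp G) where
  ι : E →ₗ[ℂ] F →ₗ[ℂ] G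
  dense : ∀ T : G, ∀ n : ℕ, ∀ ε : ℝ, 0 < ε →
    ∃ (k : ℕ) (x : Fin k → E) (y : Fin k → F), FG.P n (T - ∑ j, ι (x j) (y j)) < ε
  seminorm_eq : ∀ (n k : ℕ) (x : Fin k → E) (y : Fin k → F),
    FG.P n (∑ j, ι (x j) (y j)) =
      sInf {r : ℝ | ∃ (m : ℕ) (a : Fin m → E) (b : Fin m → F),
        (∑ j, ι (a j) (b j)) = ∑ j, ι (x j) (y j) ∧ r = ∑ j, FE.P n (a j) * FF.P n (b j)}

/-- Continuity of a linear map with respect to two families of seminorms. -/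
def SemCont {E F : Type*} [AddCommGroup E] [Module ℂ E] [AddCommGroup F] [Module ℂ F]
    {ι κ : Type*} (P : ι → Seminorm ℂ E) (Q : κ → Seminorm ℂ F) (T : E →ₗ[ℂ] F) : Prop :=
  ∀ β : κ, ∃ (s : Finset ι) (C : ℝ), 0 < C ∧ ∀ x : E, Q β (T x) ≤ C * ∑ a ∈ s, P a x

/-- Precompactness (total boundedness) with respect to a family of seminorms. -/
def IsPrecompactSem {E : Type*} [AddCommGroup E] [Module ℂ E] {ι : Type*}
    (P : ι → Seminorm ℂ E) (K : Set E) : Prop :=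
  ∀ ε : ℝ, 0 < ε → ∀ s : Finset ι, ∃ t : Finset E, ∀ x ∈ K, ∃ c ∈ t, ∀ a ∈ s, P a (x - c) < ε

/-- A finite rank linear map. -/
def FinRank {E F : Type*} [AddCommGroup E] [Module ℂ E] [AddCommGroup F] [Module ℂ F]
    (S : E →ₗ[ℂ] F) : Prop :=
  FiniteDimensional ℂ (LinearMap.range S)

/-- The approximation property: finite rank continuous operators are dense in continuous
operators for the topology of uniform convergence on precompact sets. -/
def HasAP {E : Type*} [AddCommGroup E] [Module ℂ E] {ι : Type*} (P : ι → Seminorm ℂ E) : Prop :=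
  ∀ T : E →ₗ[ℂ] E, SemCont P P T → ∀ K : Set E, IsPrecompactSem P K → ∀ ε : ℝ, 0 < ε →
    ∀ s : Finset ι, ∃ S : E →ₗ[ℂ] E, SemCont P P S ∧ FinRank S ∧
      ∀ x ∈ K, ∀ a ∈ s, P a (T x - S x) < ε

/-- A (two-sided) bounded approximate identity for the multiplication of `B`, relative to a
subset `S` (the "algebra") and a family of seminorm-values `R`. -/
def BddApproxIdOn {B : Type*} [Mul B] [Sub B] (S : Set B) (R : ℕ → B → ℝ) : Prop :=
  ∃ (J : Type) (_ : Nonempty J) (pr : Preorder J)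
    (_ : IsDirected J fun a b => pr.toLE.le a b) (u : J → B) (C : ℝ),
    0 < C ∧ (∀ α, u α ∈ S) ∧ (∀ (n : ℕ) (α : J), R n (u α) < C) ∧
    ∀ a ∈ S, ∀ n : ℕ,
      Filter.Tendsto (fun α => R n (a - u α * a)) (@Filter.atTop J pr) (nhds 0) ∧
      Filter.Tendsto (fun α => R n (a - a * u α)) (@Filter.atTop J pr) (nhds 0)

/-- A left bounded approximate identity. -/
def LeftBddApproxIdOn {B : Type*} [Mul B] [Sub B] (S : Set B) (R : ℕ → B → ℝ) : Prop :=
  ∃ (J : Type) (_ : Nonempty J) (pr : Preorder J)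
    (_ : IsDirected J fun a b => pr.toLE.le a b) (u : J → B) (C : ℝ),
    0 < C ∧ (∀ α, u α ∈ S) ∧ (∀ (n : ℕ) (α : J), R n (u α) < C) ∧
    ∀ a ∈ S, ∀ n : ℕ,
      Filter.Tendsto (fun α => R n (a - u α * a)) (@Filter.atTop J pr) (nhds 0)

/-- A right bounded approximate identity. -/
def RightBddApproxIdOn {B : Type*} [Mul B] [Sub B] (S : Set B) (R : ℕ → B → ℝ) : Prop :=
  ∃ (J : Type) (_ : Nonempty J) (pr : Preorder J)
    (_ : IsDirected J fun a b => pr.toLE.le a b) (u : J → B) (C : ℝ),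
    0 < C ∧ (∀ α, u α ∈ S) ∧ (∀ (n : ℕ) (α : J), R n (u α) < C) ∧
    ∀ a ∈ S, ∀ n : ℕ,
      Filter.Tendsto (fun α => R n (a - a * u α)) (@Filter.atTop J pr) (nhds 0)

/-- A locally bounded (two-sided) approximate identity: for each `n` a net bounded in the
`n`-th seminorm which is approximately an identity in the `n`-th seminorm. -/
def LocBddApproxIdOn {B : Type*} [Mul B] [Sub B] (S : Set B) (R : ℕ → B → ℝ) : Prop :=
  ∀ n : ℕ, ∃ (J : Type) (_ : Nonempty J) (pr : Preorder J)
    (_ : IsDirected J fun a b => pr.toLE.le a b) (u : J → B) (C : ℝ),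
    0 < C ∧ (∀ α, u α ∈ S) ∧ (∀ α : J, R n (u α) < C) ∧
    ∀ a ∈ S,
      Filter.Tendsto (fun α => R n (a - u α * a)) (@Filter.atTop J pr) (nhds 0) ∧
      Filter.Tendsto (fun α => R n (a - a * u α)) (@Filter.atTop J pr) (nhds 0)

/-- A locally bounded left approximate identity. -/
def LeftLocBddApproxIdOn {B : Type*} [Mul B] [Sub B] (S : Set B) (R : ℕ → B → ℝ) : Prop :=
  ∀ n : ℕ, ∃ (J : Type) (_ : Nonempty J) (pr : Preorder J)
    (_ : IsDirected J fun a b => pr.toLE.le a b) (u : J → B) (C : ℝ),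
    0 < C ∧ (∀ α, u α ∈ S) ∧ (∀ α : J, R n (u α) < C) ∧
    ∀ a ∈ S, Filter.Tendsto (fun α => R n (a - u α * a)) (@Filter.atTop J pr) (nhds 0)

/-- A locally bounded right approximate identity. -/
def RightLocBddApproxIdOn {B : Type*} [Mul B] [Sub B] (S : Set B) (R : ℕ → B → ℝ) : Prop :=
  ∀ n : ℕ, ∃ (J : Type) (_ : Nonempty J) (pr : Preorder J)
    (_ : IsDirected J fun a b => pr.toLE.le a b) (u : J → B) (C : ℝ),
    0 < C ∧ (∀ α, u α ∈ S) ∧ (∀ α : J, R n (u α) < C) ∧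
    ∀ a ∈ S, Filter.Tendsto (fun α => R n (a - a * u α)) (@Filter.atTop J pr) (nhds 0)


theorem stmt_7 {A : Type*} [NonUnitalRing A] [Module ℂ A] (FA : FrechetAlg A)
    {I : Type*} (U : Ultrafilter I) (hU : CountablyIncomplete U)
    (E : I → A) (hE : E ∈ linfSet FA.toFrechetSp I)
    (hid : ∀ x ∈ linfSet FA.toFrechetSp I,
      (E * x - x) ∈ nullSet FA.toFrechetSp U ∧ (x * E - x) ∈ nullSet FA.toFrechetSp U) :
    ∃ e : A, ∀ a : A, e * a = a ∧ a * e = a := by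
  classical
  -- monotonicity of seminorms
  have hmono : ∀ {n m : ℕ}, n ≤ m → ∀ x : A, FA.P n x ≤ FA.P m x := by
    intro n m h x
    induction h with
    | refl => exact le_rfl
    | step _ ih => exact ih.trans (FA.mono _ x)
  have hEbdd : ∀ n : ℕ, ∃ C : ℝ, ∀ i, FA.P n (E i) ≤ C := by
    intro n
    obtain ⟨C, hC⟩ := hE n
    exact ⟨C, fun i => hC (Set.mem_range_self i)⟩
  have hconst : ∀ a : A, (fun _ : I => a) ∈ linfSet FA.toFrechetSp I := by
    intro a n
    exact ⟨FA.P n a, by rintro r ⟨i, rfl⟩; exact le_rfl⟩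
  have hcomp : ∀ f : I → I, (fun i => E (f i)) ∈ linfSet FA.toFrechetSp I := by
    intro f n
    obtain ⟨C, hC⟩ := hEbdd n
    exact ⟨C, by rintro r ⟨i, rfl⟩; exact hC (f i)⟩
  -- eventual smallness from nullSet
  have hleft : ∀ x ∈ linfSet FA.toFrechetSp I, ∀ n : ℕ, ∀ ε : ℝ, 0 < ε →
      {i | FA.P n (E i * x i - x i) < ε} ∈ (U : Filter I) := by
    intro x hx n ε hε
    exact ((hid x hx).1 n).eventually_lt_const hε
  have hright : ∀ x ∈ linfSet FA.toFrechetSp I, ∀ n : ℕ, ∀ ε : ℝ, 0 < ε →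
      {i | FA.P n (x i * E i - x i) < ε} ∈ (U : Filter I) := by
    intro x hx n ε hε
    exact ((hid x hx).2 n).eventually_lt_const hε
  -- Key: E is U-Cauchy in every seminorm
  have key : ∀ n : ℕ, ∀ ε : ℝ, 0 < ε →
      ∃ W ∈ (U : Filter I), ∀ i ∈ W, ∀ j ∈ W, FA.P n (E i - E j) < ε := by
    intro n ε hε
    have hδ : (0:ℝ) < ε / 6 := by positivity
    set G : I → Set I := fun i =>
      {j | FA.P n (E i * E j - E i) < ε / 6 ∧ FA.P n (E j * E i - E i) < ε / 6} with hGdef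
    have hG : ∀ i, G i ∈ (U : Filter I) := by
      intro i
      have h1 := hright (fun _ => E i) (hconst (E i)) n _ hδ
      have h2 := hleft (fun _ => E i) (hconst (E i)) n _ hδ
      exact inter_mem h1 h2
    by_cases hB : {i | ∃ j, j ∈ G i ∧ ε / 2 ≤ FA.P n (E i - E j)} ∈ (U : Filter I)
    · exfalso
      have hch : ∀ i : I, ∃ j : I,
          i ∈ {i | ∃ j, j ∈ G i ∧ ε / 2 ≤ FA.P n (E i - E j)} →
            j ∈ G i ∧ ε / 2 ≤ FA.P n (E i - E j) := by
        intro i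
        by_cases h : i ∈ {i | ∃ j, j ∈ G i ∧ ε / 2 ≤ FA.P n (E i - E j)}
        · obtain ⟨j, hj⟩ := h
          exact ⟨j, fun _ => hj⟩
        · exact ⟨i, fun h' => absurd h' h⟩
      choose f hf using hch
      have h1 := hleft (fun i => E (f i)) (hcomp f) n _ hδ
      obtain ⟨i, hi1, hi2⟩ := Filter.nonempty_of_mem (inter_mem h1 hB)
      obtain ⟨hfG, hfar⟩ := hf i hi2
      have hA : FA.P n (E i * E (f i) - E i) < ε / 6 := hfG.1
      have hBB : FA.P n (E i * E (f i) - E (f i)) < ε / 6 := hi1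
      have htri : FA.P n (E i - E (f i)) ≤
          FA.P n (E i - E i * E (f i)) + FA.P n (E i * E (f i) - E (f i)) := by
        have := map_add_le_add (FA.P n) (E i - E i * E (f i)) (E i * E (f i) - E (f i))
        rwa [sub_add_sub_cancel] at this
      rw [map_sub_rev (FA.P n) (E i) (E i * E (f i))] at htri
      linarith
    · have hBc := (Ultrafilter.compl_mem_iff_notMem (f := U)).mpr hB
      obtain ⟨i₀, hi₀⟩ := Filter.nonempty_of_mem hBc
      refine ⟨G i₀, hG i₀, ?_⟩
      intro i hi j hj
      have hnot : ∀ j, j ∈ G i₀ → FA.P n (E i₀ - E j) < ε / 2 := by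
        intro j hj
        by_contra h
        exact hi₀ ⟨j, hj, le_of_not_gt h⟩
      have h1 : FA.P n (E i₀ - E i) < ε / 2 := hnot i hi
      have h2 : FA.P n (E i₀ - E j) < ε / 2 := hnot j hj
      have htri : FA.P n (E i - E j) ≤ FA.P n (E i - E i₀) + FA.P n (E i₀ - E j) := by
        have := map_add_le_add (FA.P n) (E i - E i₀) (E i₀ - E j)
        rwa [sub_add_sub_cancel] at this
      rw [map_sub_rev (FA.P n) (E i) (E i₀)] at htri
      linarith
  -- choose the U-Cauchy witnesses
  have hkey' : ∀ k : ℕ, ∃ W ∈ (U : Filter I),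
      ∀ i ∈ W, ∀ j ∈ W, FA.P k (E i - E j) < 1 / (k + 1) := by
    intro k
    exact key k _ (by positivity)
  choose W hWU hW using hkey'
  set T : ℕ → Set I := fun k => ⋂ m ∈ Finset.range (k + 1), W m with hTdef
  have hTU : ∀ k, T k ∈ (U : Filter I) := by
    intro k
    exact (Filter.biInter_finset_mem _).mpr fun m _ => hWU m
  have hTsub : ∀ k, T k ⊆ W k := by
    intro k x hx
    simp only [hTdef, Set.mem_iInter] at hx
    exact hx k (Finset.mem_range.mpr (Nat.lt_succ_self k))
  have hTmono : ∀ {j k : ℕ}, j ≤ k → T k ⊆ T j := by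
    intro j k hjk x hx
    simp only [hTdef, Set.mem_iInter, Finset.mem_range] at hx ⊢
    intro m hm
    exact hx m (lt_of_lt_of_le hm (by omega))
  have hTne : ∀ k, (T k).Nonempty := fun k => Filter.nonempty_of_mem (hTU k)
  choose idx hidx using hTne
  -- the sequence is Cauchy
  have hcauchy : ∀ n : ℕ, ∀ ε : ℝ, 0 < ε → ∃ N, ∀ j k, N ≤ j → N ≤ k →
      FA.P n (E (idx j) - E (idx k)) < ε := by
    intro n ε hε
    obtain ⟨N₀, hN₀⟩ := exists_nat_one_div_lt (K := ℝ) hε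
    refine ⟨max n N₀, ?_⟩
    intro j k hj hk
    set m := min j k with hm
    have hnm : n ≤ m := le_min (le_trans (le_max_left _ _) hj) (le_trans (le_max_left _ _) hk)
    have hN₀m : N₀ ≤ m := le_min (le_trans (le_max_right _ _) hj) (le_trans (le_max_right _ _) hk)
    have hij : idx j ∈ W m := hTsub m (hTmono (min_le_left j k) (hidx j))
    have hik : idx k ∈ W m := hTsub m (hTmono (min_le_right j k) (hidx k))
    have h1 : FA.P m (E (idx j) - E (idx k)) < 1 / (m + 1) := hW m _ hij _ hik
    have h2 : (1:ℝ) / (m + 1) ≤ 1 / (N₀ + 1) := by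
      apply one_div_le_one_div_of_le (by positivity)
      have : (N₀ : ℝ) ≤ m := Nat.cast_le.mpr hN₀m
      linarith
    calc FA.P n (E (idx j) - E (idx k)) ≤ FA.P m (E (idx j) - E (idx k)) := hmono hnm _
      _ < 1 / (m + 1) := h1
      _ ≤ 1 / (N₀ + 1) := h2
      _ < ε := hN₀
  obtain ⟨L, hL⟩ := FA.complete (fun k => E (idx k)) hcauchy
  -- E tends to L along U in every seminorm
  have hlimU : ∀ n : ℕ, ∀ ε : ℝ, 0 < ε → {j | FA.P n (E j - L) < ε} ∈ (U : Filter I) := by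
    intro n ε hε
    have h1 : ∀ᶠ k in atTop, FA.P n (E (idx k) - L) < ε / 2 :=
      (hL n).eventually_lt_const (by positivity)
    have h2 : ∀ᶠ k : ℕ in atTop, (1:ℝ) / (k + 1) < ε / 2 :=
      tendsto_one_div_add_atTop_nhds_zero_nat.eventually_lt_const (by positivity)
    have h3 : ∀ᶠ k : ℕ in atTop, n ≤ k := eventually_ge_atTop n
    obtain ⟨k, hk1, hk2, hk3⟩ := (h1.and (h2.and h3)).exists
    refine Filter.mem_of_superset (hTU k) ?_
    intro j hj
    have hjW : j ∈ W k := hTsub k hj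
    have hkW : idx k ∈ W k := hTsub k (hidx k)
    have h4 : FA.P k (E j - E (idx k)) < 1 / (k + 1) := hW k _ hjW _ hkW
    have htri : FA.P n (E j - L) ≤ FA.P n (E j - E (idx k)) + FA.P n (E (idx k) - L) := by
      have := map_add_le_add (FA.P n) (E j - E (idx k)) (E (idx k) - L)
      rwa [sub_add_sub_cancel] at this
    have h5 : FA.P n (E j - E (idx k)) ≤ FA.P k (E j - E (idx k)) := hmono hk3 _
    show FA.P n (E j - L) < ε
    linarith [hk2]
  -- L is the identity
  refine ⟨L, fun a => ?_⟩
  have hzero : ∀ (b : A), (∀ n : ℕ, ∀ ε : ℝ, 0 < ε → FA.P n b < ε) → b = 0 := by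
    intro b hb
    apply FA.sep
    intro n
    refine le_antisymm ?_ (apply_nonneg _ _)
    by_contra h
    push_neg at h
    exact absurd (hb n _ h) (lt_irrefl _)
  constructor
  · -- L * a = a
    have : L * a - a = 0 := by
      apply hzero
      intro n ε hε
      have hPa : (0:ℝ) ≤ FA.P n a := apply_nonneg _ _
      set ε' : ℝ := ε / (2 * (FA.P n a + 1)) with hε'def
      have hε' : 0 < ε' := by positivity
      have hEa := hleft (fun _ => a) (hconst a) n (ε / 2) (by positivity)
      have hEL := hlimU n ε' hε'
      obtain ⟨i, hi1, hi2⟩ := Filter.nonempty_of_mem (inter_mem hEa hEL)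
      have htri : FA.P n (L * a - a) ≤ FA.P n (L * a - E i * a) + FA.P n (E i * a - a) := by
        have := map_add_le_add (FA.P n) (L * a - E i * a) (E i * a - a)
        rwa [sub_add_sub_cancel] at this
      have h1 : FA.P n (L * a - E i * a) ≤ FA.P n (L - E i) * FA.P n a := by
        rw [← sub_mul]
        exact FA.submul n _ _
      have h2 : FA.P n (L - E i) < ε' := by
        rw [map_sub_rev]
        exact hi2
      have h3 : FA.P n (L - E i) * FA.P n a ≤ ε' * (FA.P n a + 1) :=
        mul_le_mul (le_of_lt h2) (by linarith) hPa (le_of_lt hε')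
      have h4 : ε' * (FA.P n a + 1) = ε / 2 := by
        field_simp [hε'def]
        rw [hε'def]
        linear_combination (div_mul_cancel₀ ε (ne_of_gt (by linarith) : (2 * (FA.P n a + 1)) ≠ 0))
      have h5 : FA.P n (E i * a - a) < ε / 2 := hi1
      linarith
    exact sub_eq_zero.mp this
  · -- a * L = a
    have : a * L - a = 0 := by
      apply hzero
      intro n ε hε
      have hPa : (0:ℝ) ≤ FA.P n a := apply_nonneg _ _
      set ε' : ℝ := ε / (2 * (FA.P n a + 1)) with hε'def
      have hε' : 0 < ε' := by positivity
      have hEa := hright (fun _ => a) (hconst a) n (ε / 2) (by positivity)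
      have hEL := hlimU n ε' hε'
      obtain ⟨i, hi1, hi2⟩ := Filter.nonempty_of_mem (inter_mem hEa hEL)
      have htri : FA.P n (a * L - a) ≤ FA.P n (a * L - a * E i) + FA.P n (a * E i - a) := by
        have := map_add_le_add (FA.P n) (a * L - a * E i) (a * E i - a)
        rwa [sub_add_sub_cancel] at this
      have h1 : FA.P n (a * L - a * E i) ≤ FA.P n a * FA.P n (L - E i) := by
        rw [← mul_sub]
        exact FA.submul n _ _
      have h2 : FA.P n (L - E i) < ε' := by
        rw [map_sub_rev]
        exact hi2
      have h3 : FA.P n a * FA.P n (L - E i) ≤ (FA.P n a + 1) * ε' :=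
        mul_le_mul (by linarith) (le_of_lt h2) (apply_nonneg _ _) (by linarith)
      have h4 : (FA.P n a + 1) * ε' = ε / 2 := by
        field_simp [hε'def]
        rw [hε'def]
        linear_combination (div_mul_cancel₀ ε (ne_of_gt (by linarith) : (2 * (FA.P n a + 1)) ≠ 0))
      have h5 : FA.P n (a * E i - a) < ε / 2 := hi1
      linarith
    exact sub_eq_zero.mp this

end
end

section
/- Let (E,(P_n)) be a Fréchet space with the approximation property and (F,(Q_n)) a Fréchet space. Let u = Σ_{n=1}^∞ x_n ⊗ y_n ∈ E ⊗̂ F (projective tensor product) where (x_n) and (y_n) are bounded sequences in E and F respectively with Σ P_k(x_n) Q_k(y_n) < ∞ for all k. If Σ_{n=1}^∞ ψ(y_n) x_n = 0 in E for every continuous linear functional ψ ∈ F', then u = 0. -/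
open Filter Topology

noncomputable section

section AuxLemmas

variable {E : Type*} [AddCommGroup E] [Module ℂ E]

lemma FrechetSp.mono' (FE : FrechetSp E) {j m : ℕ} (h : j ≤ m) (x : E) :
    FE.P j x ≤ FE.P m x := by
  induction m with
  | zero => simp_all
  | succ m ih =>
    rcases Nat.lt_or_ge j (m+1) with h' | h'
    · exact le_trans (ih (Nat.lt_succ_iff.mp h')) (FE.mono m x)
    · have : j = m + 1 := le_antisymm h h'
      simp [this]

lemma seminorm_sum_le {ι : Type*} (p : Seminorm ℂ E) (s : Finset ι) (f : ι → E) :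
    p (∑ i ∈ s, f i) ≤ ∑ i ∈ s, p (f i) := by
  classical
  induction s using Finset.induction with
  | empty => simp
  | insert _ _ h ih =>
    rw [Finset.sum_insert h, Finset.sum_insert h]
    exact le_trans (map_add_le_add p _ _) (by linarith)

lemma projBound {F G : Type*} [AddCommGroup F] [Module ℂ F] [AddCommGroup G] [Module ℂ G]
    {FE : FrechetSp E} {FF : FrechetSp F} {FG : FrechetSp G}
    (PT : ProjTensor FE FF FG) (n m : ℕ) (a : Fin m → E) (b : Fin m → F) :
    FG.P n (∑ j, PT.ι (a j) (b j)) ≤ ∑ j, FE.P n (a j) * FF.P n (b j) := by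
  rw [PT.seminorm_eq n m a b]
  apply csInf_le
  · refine ⟨0, fun r hr => ?_⟩
    obtain ⟨m', a', b', -, rfl⟩ := hr
    exact Finset.sum_nonneg fun j _ => mul_nonneg (apply_nonneg _ _) (apply_nonneg _ _)
  · exact ⟨m, a, b, rfl, rfl⟩

end AuxLemmas

/-- If every continuous functional kills `z`, then `z = 0`. -/
lemma sep_of_functionals {F : Type*} [AddCommGroup F] [Module ℂ F] (FF : FrechetSp F) (z : F)
    (hz : ∀ ψ : F →ₗ[ℂ] ℂ, SemCont FF.P (fun _ : Unit => normSeminorm ℂ ℂ) ψ → ψ z = 0) :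
    z = 0 := by
  apply FF.sep; intro j
  by_contra hne
  have hpos : 0 < FF.P j z := lt_of_le_of_ne (apply_nonneg _ _) (Ne.symm hne)
  have hz0 : z ≠ 0 := by rintro rfl; simp at hne
  letI : Module ℝ F := Module.compHom F (algebraMap ℝ ℂ)
  have hsmul : ∀ (r : ℝ) (w : F), r • w = (r : ℂ) • w := fun r w => rfl
  set f := LinearPMap.mkSpanSingleton (K := ℝ) (L := ℝ) (σ := RingHom.id ℝ) z (FF.P j z) hz0 with hf
  have hmemz : z ∈ f.domain := by
    rw [hf, LinearPMap.domain_mkSpanSingleton]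
    exact Submodule.mem_span_singleton_self z
  have hfz : f ⟨z, hmemz⟩ = FF.P j z := LinearPMap.mkSpanSingleton_apply ℝ ℝ hz0 _
  have hfle : ∀ v : f.domain, f v ≤ FF.P j v := by
    intro v
    have hd : f.domain = Submodule.span ℝ {z} := rfl
    have hv2 : (v : F) ∈ Submodule.span ℝ {z} := hd ▸ v.2
    obtain ⟨a, ha⟩ := Submodule.mem_span_singleton.mp hv2
    have hv : v = a • (⟨z, hmemz⟩ : f.domain) := by
      apply Subtype.ext; simp [← ha]
    rw [hv, LinearPMap.map_smul, hfz]
    have : ((a • (⟨z, hmemz⟩ : f.domain) : f.domain) : F) = a • z := by simp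
    rw [this, hsmul, map_smul_eq_mul]
    have : a • FF.P j z = a * FF.P j z := rfl
    rw [this, Complex.norm_real]
    rcases le_or_gt 0 a with h | h
    · rw [Real.norm_eq_abs, abs_of_nonneg h]
    · nlinarith [abs_nonneg a, le_abs_self a, FF.P j z, hpos, neg_abs_le a,
        Real.norm_eq_abs a ▸ (le_abs_self a)]
  obtain ⟨g, hg1, hg2⟩ := exists_extension_of_le_sublinear f (fun w => FF.P j w)
    (by intro c hc w
        show FF.P j ((c : ℂ) • w) = c * FF.P j w
        rw [map_smul_eq_mul, Complex.norm_real, Real.norm_eq_abs, abs_of_pos hc])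
    (fun a b => map_add_le_add _ a b) hfle
  have hgabs : ∀ w, |g w| ≤ FF.P j w := by
    intro w
    rcases abs_cases (g w) with ⟨h1, _⟩ | ⟨h1, _⟩
    · rw [h1]; exact hg2 w
    · rw [h1]
      have := hg2 (-w)
      rw [map_neg] at this
      have hP : FF.P j (-w) = FF.P j w := map_neg_eq_map _ _
      linarith
  -- build complex functional
  have key : ∀ (c : ℂ) (w : F), c • w = c.re • w + c.im • (Complex.I • w) := by
    intro c w
    rw [hsmul, hsmul, smul_smul, ← add_smul]
    congr 1
    exact (Complex.re_add_im c).symm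
  have hglin : ∀ (r : ℝ) (w : F), g (r • w) = r * g w := by
    intro r w; rw [map_smul, smul_eq_mul]
  have gII : ∀ w : F, g (Complex.I • (Complex.I • w)) = - g w := by
    intro w
    have h : Complex.I • Complex.I • w = (-1 : ℝ) • w := by
      rw [smul_smul, Complex.I_mul_I, hsmul]; norm_num
    rw [h, hglin]; ring
  let ψfun : F → ℂ := fun w => (g w : ℂ) - Complex.I * (g (Complex.I • w) : ℂ)
  have ψadd : ∀ a b : F, ψfun (a + b) = ψfun a + ψfun b := by
    intro a b
    simp only [ψfun, smul_add, map_add]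
    push_cast
    ring
  have ψsmul : ∀ (c : ℂ) (w : F), ψfun (c • w) = c * ψfun w := by
    intro c w
    have h1 : g (c • w) = c.re * g w + c.im * g (Complex.I • w) := by
      rw [key c w, map_add, hglin, hglin]
    have h2 : g (Complex.I • (c • w)) = c.re * g (Complex.I • w) - c.im * g w := by
      have e0 : Complex.I • (c • w) = c • (Complex.I • w) := by
        rw [smul_smul, smul_smul, mul_comm]
      rw [e0, key c (Complex.I • w), map_add, hglin, hglin, gII w]
      ring
    simp only [ψfun, h1, h2]
    conv_rhs => rw [← Complex.re_add_im c]
    push_cast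
    ring_nf
    simp only [Complex.I_sq]
    ring
  let ψ : F →ₗ[ℂ] ℂ :=
    { toFun := ψfun
      map_add' := ψadd
      map_smul' := by intro c w; simpa using ψsmul c w }
  have hre : ∀ w, (ψ w).re = g w := by
    intro w
    simp [ψ, ψfun, Complex.sub_re, Complex.mul_re]
  have hψbound : ∀ w, ‖ψ w‖ ≤ FF.P j w := by
    intro w
    rcases eq_or_ne (ψ w) 0 with h | h
    · rw [h]; simpa using apply_nonneg (FF.P j) w
    · set c : ℂ := (‖ψ w‖ : ℂ) / (ψ w) with hc
      have hcw : ψ (c • w) = (‖ψ w‖ : ℂ) := by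
        rw [map_smul]
        simp only [smul_eq_mul, hc]
        field_simp
      have hnc : ‖c‖ = 1 := by
        rw [hc, norm_div, Complex.norm_real, Real.norm_eq_abs,
          abs_of_nonneg (norm_nonneg _), div_self (norm_ne_zero_iff.mpr h)]
      have : ‖ψ w‖ = (ψ (c • w)).re := by rw [hcw]; simp
      rw [this, hre]
      calc g (c • w) ≤ FF.P j (c • w) := hg2 _
        _ = FF.P j w := by rw [map_smul_eq_mul, hnc, one_mul]
  have hcont : SemCont FF.P (fun _ : Unit => normSeminorm ℂ ℂ) ψ := by
    intro β
    exact ⟨{j}, 1, one_pos, fun w => by simpa using hψbound w⟩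
  have := hz ψ hcont
  have : (ψ z).re = 0 := by rw [this]; simp
  rw [hre] at this
  have hgz : g z = FF.P j z := by
    have := hg1 ⟨z, hmemz⟩
    rwa [hfz] at this
  rw [hgz] at this
  exact hne this


lemma finrank_decomp {E : Type*} [AddCommGroup E] [Module ℂ E] (FE : FrechetSp E)
    (S : E →ₗ[ℂ] E) (hS : SemCont FE.P FE.P S) (hFR : FinRank S) :
    ∃ (r : ℕ) (e : Fin r → E) (φ : Fin r → (E →ₗ[ℂ] ℂ)) (C : ℝ) (m : ℕ),
      (∀ x : E, S x = ∑ i, φ i x • e i) ∧ 0 ≤ C ∧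
      ∀ (i : Fin r) (x : E), ‖φ i x‖ ≤ C * FE.P m x := by
  haveI : FiniteDimensional ℂ (LinearMap.range S) := hFR
  set V := LinearMap.range S with hV
  -- kernels of restricted seminorms
  let K : ℕ → Submodule ℂ V := fun j =>
    { carrier := {v | FE.P j (v : E) = 0}
      add_mem' := by
        intro a b ha hb
        simp only [Set.mem_setOf_eq] at *
        have h1 := map_add_le_add (FE.P j) (a : E) (b : E)
        have h2 := apply_nonneg (FE.P j) ((a : E) + (b : E))
        have : ((a + b : V) : E) = (a : E) + (b : E) := rfl
        rw [this]; linarith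
      zero_mem' := by simp
      smul_mem' := by
        intro c a ha
        simp only [Set.mem_setOf_eq] at *
        have : ((c • a : V) : E) = c • (a : E) := rfl
        rw [this, map_smul_eq_mul, ha, mul_zero] }
  have hKmem : ∀ j (v : V), v ∈ K j ↔ FE.P j (v : E) = 0 := fun j v => Iff.rfl
  have hKanti : ∀ {j m : ℕ}, j ≤ m → K m ≤ K j := by
    intro j m hjm v hv
    rw [hKmem] at *
    exact le_antisymm (hv ▸ FE.mono' hjm (v : E)) (apply_nonneg _ _)
  obtain ⟨j₀, hj₀⟩ := Nat.sInf_mem (Set.range_nonempty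
    (fun j => Module.finrank ℂ (K j)))
  have hstab : ∀ j, j₀ ≤ j → K j = K j₀ := by
    intro j hj
    refine Submodule.eq_of_le_of_finrank_le (hKanti hj) ?_
    have heq : Module.finrank ℂ (K j₀) = sInf (Set.range fun j => Module.finrank ℂ (K j)) := hj₀
    rw [heq]
    exact Nat.sInf_le ⟨j, rfl⟩
  have hnorm0 : ∀ v : V, FE.P j₀ (v : E) = 0 → v = 0 := by
    intro v hv
    have hall : ∀ j, FE.P j (v : E) = 0 := by
      intro j
      rcases le_total j j₀ with h | h
      · exact le_antisymm (hv ▸ FE.mono' h (v : E)) (apply_nonneg _ _)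
      · have : v ∈ K j := (hstab j h).symm ▸ ((hKmem j₀ v).mpr hv)
        exact (hKmem j v).mp this
    exact Subtype.ext (FE.sep _ hall)
  let nV : AddGroupNorm V :=
    { toFun := fun v => FE.P j₀ (v : E)
      map_zero' := by simp
      add_le' := fun a b => map_add_le_add _ _ _
      neg' := fun a => map_neg_eq_map _ _
      eq_zero_of_map_eq_zero' := fun a ha => hnorm0 a ha }
  letI : NormedAddCommGroup V := nV.toNormedAddCommGroup
  have hne : ∀ v : V, ‖v‖ = FE.P j₀ (v : E) := fun v => rfl
  letI : NormedSpace ℂ V := by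
    refine ⟨fun c v => ?_⟩
    rw [hne, hne]
    have : ((c • v : V) : E) = c • (v : E) := rfl
    rw [this, map_smul_eq_mul]
  let b := Module.finBasis ℂ V
  set r := Module.finrank ℂ V with hr
  let φ' : Fin r → (V →ₗ[ℂ] ℂ) := fun i => b.coord i
  have hcont : ∀ i, Continuous (φ' i) := fun i =>
    LinearMap.continuous_of_finiteDimensional (φ' i)
  let clm : Fin r → (V →L[ℂ] ℂ) := fun i => ⟨φ' i, hcont i⟩
  obtain ⟨s, Cs, hCs, hbS⟩ := hS j₀
  set m := s.sup id with hm
  have hsumle : ∀ x : E, ∑ a ∈ s, FE.P a x ≤ (s.card : ℝ) * FE.P m x := by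
    intro x
    have : ∀ a ∈ s, FE.P a x ≤ FE.P m x := fun a ha =>
      FE.mono' (Finset.le_sup (f := id) ha) x
    calc ∑ a ∈ s, FE.P a x ≤ ∑ _a ∈ s, FE.P m x := Finset.sum_le_sum this
      _ = (s.card : ℝ) * FE.P m x := by rw [Finset.sum_const, nsmul_eq_mul]
  let φ : Fin r → (E →ₗ[ℂ] ℂ) := fun i => (φ' i).comp S.rangeRestrict
  let e : Fin r → E := fun i => (b i : E)
  set C : ℝ := (∑ i, ‖clm i‖ + 1) * (Cs * (s.card : ℝ)) with hC
  have hC0 : 0 ≤ C := by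
    apply mul_nonneg
    · have : (0:ℝ) ≤ ∑ i, ‖clm i‖ := Finset.sum_nonneg fun i _ => norm_nonneg _
      linarith
    · positivity
  refine ⟨r, e, φ, C, m, ?_, hC0, ?_⟩
  · intro x
    have hrepr := b.sum_repr (S.rangeRestrict x)
    have := congrArg (fun v : V => (v : E)) hrepr
    simp only [Submodule.coe_sum] at this
    rw [show ((S.rangeRestrict x : V) : E) = S x from rfl] at this
    rw [← this]
    apply Finset.sum_congr rfl
    intro i _
    have : φ i x = b.repr (S.rangeRestrict x) i := by
      simp [φ, φ', Module.Basis.coord_apply]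
    rw [this]
    rfl
  · intro i x
    have h1 : ‖φ i x‖ ≤ ‖clm i‖ * ‖S.rangeRestrict x‖ :=
      (clm i).le_opNorm (S.rangeRestrict x)
    have h2 : ‖S.rangeRestrict x‖ = FE.P j₀ (S x) := by
      rw [hne]; rfl
    have h3 : FE.P j₀ (S x) ≤ Cs * ∑ a ∈ s, FE.P a x := hbS x
    have h4 : ∑ a ∈ s, FE.P a x ≤ (s.card : ℝ) * FE.P m x := hsumle x
    have h5 : ‖clm i‖ ≤ ∑ i', ‖clm i'‖ + 1 := by
      have : ‖clm i‖ ≤ ∑ i', ‖clm i'‖ :=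
        Finset.single_le_sum (f := fun i' => ‖clm i'‖) (fun i' _ => norm_nonneg _)
          (Finset.mem_univ i)
      linarith
    calc ‖φ i x‖ ≤ ‖clm i‖ * ‖S.rangeRestrict x‖ := h1
      _ = ‖clm i‖ * FE.P j₀ (S x) := by rw [h2]
      _ ≤ ‖clm i‖ * (Cs * ((s.card : ℝ) * FE.P m x)) := by
          apply mul_le_mul_of_nonneg_left _ (norm_nonneg _)
          calc FE.P j₀ (S x) ≤ Cs * ∑ a ∈ s, FE.P a x := h3
            _ ≤ Cs * ((s.card : ℝ) * FE.P m x) :=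
                mul_le_mul_of_nonneg_left h4 (le_of_lt hCs)
      _ ≤ (∑ i', ‖clm i'‖ + 1) * (Cs * ((s.card : ℝ) * FE.P m x)) :=
          mul_le_mul_of_nonneg_right h5
            (mul_nonneg hCs.le (mul_nonneg (Nat.cast_nonneg _) (apply_nonneg _ _)))
      _ = C * FE.P m x := by rw [hC]; ring


section Tails
variable (e : ℕ → ℝ)

lemma tail_summable (hse : Summable e) (n : ℕ) : Summable (fun m => e (m + n)) :=
  (summable_nat_add_iff n).mpr hse

lemma tail_nonneg (he0 : ∀ n, 0 ≤ e n) (n : ℕ) : 0 ≤ ∑' m, e (m + n) :=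
  tsum_nonneg fun m => he0 _

lemma tail_le (he0 : ∀ n, 0 ≤ e n) (hse : Summable e) (n : ℕ) :
    e n ≤ ∑' m, e (m + n) := by
  have := Summable.le_tsum (tail_summable e hse n) 0 (fun j _ => he0 _)
  simpa using this

lemma tail_succ (hse : Summable e) (n : ℕ) :
    (∑' m, e (m + n)) = e n + ∑' m, e (m + (n + 1)) := by
  have h := (Summable.sum_add_tsum_nat_add (f := fun m => e (m + n)) 1
    (tail_summable e hse n)).symm
  simp only [Finset.sum_range_one, zero_add] at h
  rw [h]
  congr 1
  exact tsum_congr fun i => by congr 1; omega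

lemma tail_anti (he0 : ∀ n, 0 ≤ e n) (hse : Summable e) (n : ℕ) :
    (∑' m, e (m + (n + 1))) ≤ ∑' m, e (m + n) := by
  rw [tail_succ e hse n]
  linarith [he0 n]

lemma tail_tendsto : Tendsto (fun n => ∑' m, e (m + n)) atTop (𝓝 0) :=
  tendsto_sum_nat_add e

lemma tail_sqrt_term (he0 : ∀ n, 0 ≤ e n) (hse : Summable e) (n : ℕ) :
    e n / Real.sqrt (∑' m, e (m + n)) ≤
      2 * (Real.sqrt (∑' m, e (m + n)) - Real.sqrt (∑' m, e (m + (n + 1)))) := by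
  set Tn := ∑' m, e (m + n) with hTn
  set Tn1 := ∑' m, e (m + (n + 1)) with hTn1
  have hTn0 : 0 ≤ Tn := tail_nonneg e he0 n
  have hTn10 : 0 ≤ Tn1 := tail_nonneg e he0 (n + 1)
  have hrec : Tn = e n + Tn1 := tail_succ e hse n
  rcases eq_or_lt_of_le hTn0 with h0 | h0
  · have he : e n = 0 := le_antisymm (by linarith [tail_le e he0 hse n]) (he0 n)
    have h1 : Tn1 = 0 := by linarith
    rw [he, ← h0, h1]
    simp
  · set A := Real.sqrt Tn with hA
    set B := Real.sqrt Tn1 with hB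
    have hApos : 0 < A := Real.sqrt_pos.mpr h0
    have hB0 : 0 ≤ B := Real.sqrt_nonneg _
    have hBA : B ≤ A := Real.sqrt_le_sqrt (by linarith [he0 n])
    have hA2 : A ^ 2 = Tn := Real.sq_sqrt hTn0
    have hB2 : B ^ 2 = Tn1 := Real.sq_sqrt hTn10
    rw [div_le_iff₀ hApos]
    nlinarith [sq_nonneg (A - B)]

lemma tail_sqrt_sum (he0 : ∀ n, 0 ≤ e n) (hse : Summable e) (N : ℕ) :
    ∑ n ∈ Finset.range N, e n / Real.sqrt (∑' m, e (m + n)) ≤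
      2 * Real.sqrt (∑' m, e m) := by
  have h1 : ∑ n ∈ Finset.range N, e n / Real.sqrt (∑' m, e (m + n)) ≤
      ∑ n ∈ Finset.range N,
        2 * (Real.sqrt (∑' m, e (m + n)) - Real.sqrt (∑' m, e (m + (n + 1)))) :=
    Finset.sum_le_sum fun n _ => tail_sqrt_term e he0 hse n
  have h2 : ∑ n ∈ Finset.range N,
      2 * (Real.sqrt (∑' m, e (m + n)) - Real.sqrt (∑' m, e (m + (n + 1)))) =
      2 * (Real.sqrt (∑' m, e (m + 0)) - Real.sqrt (∑' m, e (m + N))) := by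
    rw [← Finset.mul_sum, Finset.sum_range_sub' (fun n => Real.sqrt (∑' m, e (m + n))) N]
  have h3 : Real.sqrt (∑' m, e (m + 0)) = Real.sqrt (∑' m, e m) := by norm_num
  calc _ ≤ _ := h1
    _ = _ := h2
    _ ≤ 2 * Real.sqrt (∑' m, e m) := by
        rw [h3]
        have := Real.sqrt_nonneg (∑' m, e (m + N))
        linarith
end Tails


set_option maxHeartbeats 4000000 in
theorem stmt_12 {E F G : Type*} [AddCommGroup E] [Module ℂ E] [AddCommGroup F] [Module ℂ F]
    [AddCommGroup G] [Module ℂ G]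
    (FE : FrechetSp E) (FF : FrechetSp F) (FG : FrechetSp G)
    (hAP : HasAP FE.P) (PT : ProjTensor FE FF FG)
    (x : ℕ → E) (y : ℕ → F)
    (hxb : ∀ k : ℕ, BddAbove (Set.range fun n => FE.P k (x n)))
    (hyb : ∀ k : ℕ, BddAbove (Set.range fun n => FF.P k (y n)))
    (hsum : ∀ k : ℕ, Summable fun n => FE.P k (x n) * FF.P k (y n))
    (u : G)
    (hu : ∀ k : ℕ, Filter.Tendsto
      (fun N => FG.P k (u - ∑ n ∈ Finset.range N, PT.ι (x n) (y n))) Filter.atTop (nhds 0))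
    (hψ : ∀ ψ : F →ₗ[ℂ] ℂ, SemCont FF.P (fun _ : Unit => normSeminorm ℂ ℂ) ψ →
      ∀ k : ℕ, Filter.Tendsto
        (fun N => FE.P k (∑ n ∈ Finset.range N, ψ (y n) • x n)) Filter.atTop (nhds 0)) :
    u = 0 := by
  classical
  -- uniform bounds
  have hMf' : ∀ k, ∃ M, ∀ n, FE.P k (x n) ≤ M := by
    intro k; obtain ⟨M, hM⟩ := hxb k; exact ⟨M, fun n => hM ⟨n, rfl⟩⟩
  choose Mf hMf using hMf'
  have hLf' : ∀ k, ∃ M, ∀ n, FF.P k (y n) ≤ M := by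
    intro k; obtain ⟨M, hM⟩ := hyb k; exact ⟨M, fun n => hM ⟨n, rfl⟩⟩
  choose Lf hLf using hLf'
  set A : ℕ → ℝ := fun j => ∑' n, FE.P j (x n) * FF.P j (y n) with hAdef
  have hA0 : ∀ j, 0 ≤ A j := fun j =>
    tsum_nonneg fun n => mul_nonneg (apply_nonneg _ _) (apply_nonneg _ _)
  set R : ℕ → ℝ := fun j => (1 + |Mf j|) * (1 + |Lf j|) with hRdef
  have hR1 : ∀ j, 1 ≤ R j := by
    intro j; have := abs_nonneg (Mf j); have := abs_nonneg (Lf j)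
    simp only [hRdef]; nlinarith
  set den : ℕ → ℝ := fun j => R j * (1 + A j) with hdendef
  have hden1 : ∀ j, 1 ≤ den j := by
    intro j; have := hR1 j; have := hA0 j
    simp only [hdendef]; nlinarith
  have hdenpos : ∀ j, 0 < den j := fun j => lt_of_lt_of_le one_pos (hden1 j)
  set α : ℕ → ℝ := fun j => (1/2 : ℝ)^j / den j with hαdef
  have hα0 : ∀ j, 0 < α j := fun j => div_pos (pow_pos (by norm_num) j) (hdenpos j)
  have hgeo : Summable (fun j : ℕ => ((1:ℝ)/2)^j) :=
    summable_geometric_of_lt_one (by norm_num) (by norm_num)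
  have hαle : ∀ j, α j ≤ (1/2 : ℝ)^j := fun j =>
    div_le_self (pow_nonneg (by norm_num) j) (hden1 j)
  have hαmul : ∀ j (t : ℝ), t ≤ den j → α j * t ≤ (1/2 : ℝ)^j := by
    intro j t ht
    have h1 : α j * t ≤ α j * den j := by
      rcases le_or_gt t (den j) with h | h
      · exact mul_le_mul_of_nonneg_left ht (hα0 j).le
      · linarith
    have h2 : α j * den j = (1/2 : ℝ)^j := by
      simp only [hαdef]
      exact div_mul_cancel₀ _ (hdenpos j).ne'
    linarith
  have hPden : ∀ j n, FE.P j (x n) ≤ den j := by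
    intro j n
    have h1 := hMf j n
    have h2 : (1:ℝ) ≤ (1 + |Lf j|) * (1 + A j) := by
      have := abs_nonneg (Lf j); have := hA0 j; nlinarith
    have h3 : Mf j ≤ |Mf j| := le_abs_self _
    simp only [hdendef, hRdef]
    nlinarith [abs_nonneg (Mf j)]
  have hQden : ∀ j n, FF.P j (y n) ≤ den j := by
    intro j n
    have h1 := hLf j n
    have h2 : (1:ℝ) ≤ (1 + |Mf j|) * (1 + A j) := by
      have := abs_nonneg (Mf j); have := hA0 j; nlinarith
    have h3 : Lf j ≤ |Lf j| := le_abs_self _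
    simp only [hdendef, hRdef]
    nlinarith [abs_nonneg (Lf j)]
  have hαP : ∀ j n, α j * FE.P j (x n) ≤ (1/2 : ℝ)^j := fun j n => hαmul j _ (hPden j n)
  have hαQ : ∀ j n, α j * FF.P j (y n) ≤ (1/2 : ℝ)^j := fun j n => hαmul j _ (hQden j n)
  have hαA : ∀ j, α j * (1 + A j) ≤ (1/2 : ℝ)^j := by
    intro j
    refine hαmul j _ ?_
    have := hR1 j; have := hA0 j
    simp only [hdendef]; nlinarith
  have hαR : ∀ j, α j * R j ≤ (1/2 : ℝ)^j := by
    intro j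
    refine hαmul j _ ?_
    have := hR1 j; have := hA0 j
    simp only [hdendef]; nlinarith
  -- weights c, d
  have hcs : ∀ n, Summable fun j => α j * FE.P j (x n) := fun n =>
    Summable.of_nonneg_of_le (fun j => mul_nonneg (hα0 j).le (apply_nonneg _ _))
      (fun j => hαP j n) hgeo
  have hds : ∀ n, Summable fun j => α j * FF.P j (y n) := fun n =>
    Summable.of_nonneg_of_le (fun j => mul_nonneg (hα0 j).le (apply_nonneg _ _))
      (fun j => hαQ j n) hgeo
  set c : ℕ → ℝ := fun n => ∑' j, α j * FE.P j (x n) with hcdef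
  set d : ℕ → ℝ := fun n => ∑' j, α j * FF.P j (y n) with hddef
  have hc0 : ∀ n, 0 ≤ c n := fun n =>
    tsum_nonneg fun j => mul_nonneg (hα0 j).le (apply_nonneg _ _)
  have hd0 : ∀ n, 0 ≤ d n := fun n =>
    tsum_nonneg fun j => mul_nonneg (hα0 j).le (apply_nonneg _ _)
  have hPc : ∀ j n, FE.P j (x n) ≤ (α j)⁻¹ * c n := by
    intro j n
    rw [le_inv_mul_iff₀ (hα0 j)]
    exact Summable.le_tsum (hcs n) j fun l _ => mul_nonneg (hα0 l).le (apply_nonneg _ _)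
  have hQd : ∀ j n, FF.P j (y n) ≤ (α j)⁻¹ * d n := by
    intro j n
    rw [le_inv_mul_iff₀ (hα0 j)]
    exact Summable.le_tsum (hds n) j fun l _ => mul_nonneg (hα0 l).le (apply_nonneg _ _)
  -- the dominating summable sequence e
  set H : ℕ → ℕ × ℕ → ℝ := fun n p =>
    α p.1 * α p.2 * (FE.P (p.1 ⊔ p.2) (x n) * FF.P (p.1 ⊔ p.2) (y n)) with hHdef
  have hH0 : ∀ n p, 0 ≤ H n p := fun n p =>
    mul_nonneg (mul_nonneg (hα0 _).le (hα0 _).le)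
      (mul_nonneg (apply_nonneg _ _) (apply_nonneg _ _))
  have hmaj : Summable (fun p : ℕ × ℕ => ((1:ℝ)/2)^p.1 * ((1:ℝ)/2)^p.2) :=
    hgeo.mul_of_nonneg hgeo (fun j => by positivity) (fun j => by positivity)
  have hHb : ∀ n p, H n p ≤ 2 * (((1:ℝ)/2)^p.1 * ((1:ℝ)/2)^p.2) := by
    rintro n ⟨j, l⟩
    have hsupR : FE.P (j ⊔ l) (x n) * FF.P (j ⊔ l) (y n) ≤ R j + R l := by
      have h1 : FE.P (j ⊔ l) (x n) * FF.P (j ⊔ l) (y n) ≤ R (j ⊔ l) := by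
        have hm := hMf (j ⊔ l) n
        have hl := hLf (j ⊔ l) n
        simp only [hRdef]
        nlinarith [apply_nonneg (FE.P (j ⊔ l)) (x n), apply_nonneg (FF.P (j ⊔ l)) (y n),
          le_abs_self (Mf (j ⊔ l)), le_abs_self (Lf (j ⊔ l)),
          abs_nonneg (Mf (j ⊔ l)), abs_nonneg (Lf (j ⊔ l))]
      rcases le_total j l with h | h
      · rw [sup_eq_right.mpr h] at h1 ⊢
        have := hR1 j; linarith
      · rw [sup_eq_left.mpr h] at h1 ⊢
        have := hR1 l; linarith
    have hc1 : H n (j, l) = (α j * α l) * (FE.P (j ⊔ l) (x n) * FF.P (j ⊔ l) (y n)) := rfl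
    have step1 : H n (j, l) ≤ (α j * α l) * (R j + R l) := by
      rw [hc1]
      exact mul_le_mul_of_nonneg_left hsupR (mul_nonneg (hα0 j).le (hα0 l).le)
    have step2 : (α j * α l) * (R j + R l) = (α j * R j) * α l + α j * (α l * R l) := by ring
    have step3 : (α j * R j) * α l ≤ ((1:ℝ)/2)^j * ((1:ℝ)/2)^l :=
      mul_le_mul (hαR j) (hαle l) (hα0 l).le (by positivity)
    have step4 : α j * (α l * R l) ≤ ((1:ℝ)/2)^j * ((1:ℝ)/2)^l :=
      mul_le_mul (hαle j) (hαR l) (mul_nonneg (hα0 l).le (by linarith [hR1 l])) (by positivity)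
    calc H n (j, l) ≤ (α j * R j) * α l + α j * (α l * R l) := by rw [← step2]; exact step1
      _ ≤ ((1:ℝ)/2)^j * ((1:ℝ)/2)^l + ((1:ℝ)/2)^j * ((1:ℝ)/2)^l := add_le_add step3 step4
      _ = 2 * (((1:ℝ)/2)^j * ((1:ℝ)/2)^l) := by ring
  have hHs : ∀ n, Summable (H n) := fun n =>
    Summable.of_nonneg_of_le (hH0 n) (hHb n) (hmaj.mul_left 2)
  set e : ℕ → ℝ := fun n => ∑' p, H n p with hedef
  have he0 : ∀ n, 0 ≤ e n := fun n => tsum_nonneg (hH0 n)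
  have hcde : ∀ n, c n * d n ≤ e n := by
    intro n
    have hn1 : (fun j => ‖α j * FE.P j (x n)‖) = fun j => α j * FE.P j (x n) :=
      funext fun j => Real.norm_of_nonneg (mul_nonneg (hα0 j).le (apply_nonneg _ _))
    have hn2 : (fun j => ‖α j * FF.P j (y n)‖) = fun j => α j * FF.P j (y n) :=
      funext fun j => Real.norm_of_nonneg (mul_nonneg (hα0 j).le (apply_nonneg _ _))
    have hprod := tsum_mul_tsum_of_summable_norm
      (f := fun j => α j * FE.P j (x n)) (g := fun j => α j * FF.P j (y n))
      (by rw [hn1]; exact hcs n) (by rw [hn2]; exact hds n)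
    have hcd : c n * d n =
        ∑' z : ℕ × ℕ, (α z.1 * FE.P z.1 (x n)) * (α z.2 * FF.P z.2 (y n)) := hprod
    rw [hcd]
    refine Summable.tsum_le_tsum ?_ ((hcs n).mul_of_nonneg (hds n)
      (fun j => mul_nonneg (hα0 j).le (apply_nonneg _ _))
      (fun j => mul_nonneg (hα0 j).le (apply_nonneg _ _))) (hHs n)
    rintro ⟨j, l⟩
    have h1 : FE.P j (x n) ≤ FE.P (j ⊔ l) (x n) := FE.mono' le_sup_left _
    have h2 : FF.P l (y n) ≤ FF.P (j ⊔ l) (y n) := FF.mono' le_sup_right _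
    calc (α j * FE.P j (x n)) * (α l * FF.P l (y n))
        = (α j * α l) * (FE.P j (x n) * FF.P l (y n)) := by ring
      _ ≤ (α j * α l) * (FE.P (j ⊔ l) (x n) * FF.P (j ⊔ l) (y n)) :=
          mul_le_mul_of_nonneg_left
            (mul_le_mul h1 h2 (apply_nonneg _ _) (apply_nonneg _ _))
            (mul_nonneg (hα0 j).le (hα0 l).le)
      _ = H n (j, l) := rfl
  have hse : Summable e := by
    apply summable_of_sum_range_le (c := 4) he0
    intro N
    have hswap : ∑ n ∈ Finset.range N, e n = ∑' p : ℕ × ℕ, ∑ n ∈ Finset.range N, H n p :=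
      (Summable.tsum_finsetSum fun n _ => hHs n).symm
    rw [hswap]
    have hterm : ∀ p : ℕ × ℕ, ∑ n ∈ Finset.range N, H n p ≤ ((1:ℝ)/2)^p.1 * ((1:ℝ)/2)^p.2 := by
      rintro ⟨j, l⟩
      have h1 : ∑ n ∈ Finset.range N, H n (j, l) =
          α j * α l * ∑ n ∈ Finset.range N, (FE.P (j ⊔ l) (x n) * FF.P (j ⊔ l) (y n)) := by
        rw [Finset.mul_sum]
      have h2 : ∑ n ∈ Finset.range N, (FE.P (j ⊔ l) (x n) * FF.P (j ⊔ l) (y n)) ≤ A (j ⊔ l) :=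
        Summable.sum_le_tsum _ (fun i _ => mul_nonneg (apply_nonneg _ _) (apply_nonneg _ _))
          (hsum (j ⊔ l))
      have h3 : A (j ⊔ l) ≤ (1 + A j) * (1 + A l) := by
        rcases le_total j l with h | h
        · rw [sup_eq_right.mpr h]; nlinarith [hA0 j, hA0 l]
        · rw [sup_eq_left.mpr h]; nlinarith [hA0 j, hA0 l]
      calc ∑ n ∈ Finset.range N, H n (j, l)
          ≤ α j * α l * ((1 + A j) * (1 + A l)) := by
            rw [h1]
            exact mul_le_mul_of_nonneg_left (h2.trans h3) (mul_nonneg (hα0 j).le (hα0 l).le)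
        _ = (α j * (1 + A j)) * (α l * (1 + A l)) := by ring
        _ ≤ ((1:ℝ)/2)^j * ((1:ℝ)/2)^l :=
            mul_le_mul (hαA j) (hαA l)
              (mul_nonneg (hα0 l).le (by linarith [hA0 l])) (by positivity)
    have hsum1 : Summable (fun p : ℕ × ℕ => ∑ n ∈ Finset.range N, H n p) :=
      Summable.of_nonneg_of_le
        (fun p => Finset.sum_nonneg fun n _ => hH0 n p) hterm hmaj
    calc ∑' p : ℕ × ℕ, ∑ n ∈ Finset.range N, H n p
        ≤ ∑' p : ℕ × ℕ, ((1:ℝ)/2)^p.1 * ((1:ℝ)/2)^p.2 := Summable.tsum_le_tsum hterm hsum1 hmaj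
      _ ≤ 4 := by
          have hn1 : (fun j : ℕ => ‖((1:ℝ)/2)^j‖) = fun j : ℕ => ((1:ℝ)/2)^j :=
            funext fun j => Real.norm_of_nonneg (by positivity)
          have := (tsum_mul_tsum_of_summable_norm
            (f := fun j : ℕ => ((1:ℝ)/2)^j) (g := fun j : ℕ => ((1:ℝ)/2)^j)
            (by rw [hn1]; exact hgeo) (by rw [hn1]; exact hgeo)).symm
          rw [this, tsum_geometric_of_lt_one (by norm_num) (by norm_num)]
          norm_num
  -- tails
  set T : ℕ → ℝ := fun n => ∑' m, e (m + n) with hTdef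
  have hT0 : ∀ n, 0 ≤ T n := fun n => tail_nonneg e he0 n
  have hTle : ∀ n, e n ≤ T n := fun n => tail_le e he0 hse n
  have hTanti0 : ∀ n, T n ≤ T 0 := by
    intro n
    induction n with
    | zero => exact le_refl _
    | succ n ih => exact le_trans (tail_anti e he0 hse n) ih
  have hT0eq : T 0 = ∑' m, e m := by
    simp only [hTdef]
    exact tsum_congr fun m => by norm_num
  have hsqrtsum : ∀ N, ∑ n ∈ Finset.range N, e n / Real.sqrt (T n) ≤ 2 * Real.sqrt (T 0) := by
    intro N
    have := tail_sqrt_sum e he0 hse N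
    rw [hT0eq]
    exact this
  -- degenerate indices
  have he_zero : ∀ n, e n = 0 → x n = 0 ∨ y n = 0 := by
    intro n hn
    by_contra hcon
    push_neg at hcon
    obtain ⟨hx0, hy0⟩ := hcon
    have hj1 : ∃ j, FE.P j (x n) ≠ 0 := by
      by_contra h; push_neg at h
      exact hx0 (FE.sep _ h)
    have hj2 : ∃ j, FF.P j (y n) ≠ 0 := by
      by_contra h; push_neg at h
      exact hy0 (FF.sep _ h)
    obtain ⟨j1, hja⟩ := hj1
    obtain ⟨j2, hjb⟩ := hj2
    have hp1 : 0 < FE.P (j1 ⊔ j2) (x n) :=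
      lt_of_lt_of_le (lt_of_le_of_ne (apply_nonneg _ _) (Ne.symm hja)) (FE.mono' le_sup_left _)
    have hp2 : 0 < FF.P (j1 ⊔ j2) (y n) :=
      lt_of_lt_of_le (lt_of_le_of_ne (apply_nonneg _ _) (Ne.symm hjb)) (FF.mono' le_sup_right _)
    have hHpos : 0 < H n (j1, j2) :=
      mul_pos (mul_pos (hα0 j1) (hα0 j2)) (mul_pos hp1 hp2)
    have hle : H n (j1, j2) ≤ e n := Summable.le_tsum (hHs n) (j1, j2) fun p _ => hH0 n p
    rw [hn] at hle
    linarith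
  have hpos' : ∀ n, e n ≠ 0 → 0 < c n ∧ 0 < d n ∧ 0 < T n := by
    intro n hne
    have hep : 0 < e n := lt_of_le_of_ne (he0 n) (Ne.symm hne)
    have hxn : x n ≠ 0 := by
      intro h
      apply hne
      have : ∀ p : ℕ × ℕ, H n p = 0 := by
        intro p; simp [hHdef, h]
      simp only [hedef]
      rw [tsum_congr this, tsum_zero]
    have hyn : y n ≠ 0 := by
      intro h
      apply hne
      have : ∀ p : ℕ × ℕ, H n p = 0 := by
        intro p; simp [hHdef, h]
      simp only [hedef]
      rw [tsum_congr this, tsum_zero]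
    have hj1 : ∃ j, FE.P j (x n) ≠ 0 := by
      by_contra h; push_neg at h; exact hxn (FE.sep _ h)
    have hj2 : ∃ j, FF.P j (y n) ≠ 0 := by
      by_contra h; push_neg at h; exact hyn (FF.sep _ h)
    obtain ⟨j1, hja⟩ := hj1
    obtain ⟨j2, hjb⟩ := hj2
    refine ⟨?_, ?_, lt_of_lt_of_le hep (hTle n)⟩
    · have h1 : 0 < α j1 * FE.P j1 (x n) :=
        mul_pos (hα0 j1) (lt_of_le_of_ne (apply_nonneg _ _) (Ne.symm hja))
      exact lt_of_lt_of_le h1 (Summable.le_tsum (hcs n) j1 fun l _ =>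
        mul_nonneg (hα0 l).le (apply_nonneg _ _))
    · have h1 : 0 < α j2 * FF.P j2 (y n) :=
        mul_pos (hα0 j2) (lt_of_le_of_ne (apply_nonneg _ _) (Ne.symm hjb))
      exact lt_of_lt_of_le h1 (Summable.le_tsum (hds n) j2 fun l _ =>
        mul_nonneg (hα0 l).le (apply_nonneg _ _))
  -- rescaled sequences
  set xp : ℕ → E := fun n =>
    if e n = 0 then 0 else ((Real.sqrt (T n) / c n : ℝ) : ℂ) • x n with hxpdef
  set yp : ℕ → F := fun n =>
    if e n = 0 then 0 else ((c n / Real.sqrt (T n) : ℝ) : ℂ) • y n with hypdef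
  have hxpb : ∀ j n, FE.P j (xp n) ≤ (α j)⁻¹ * Real.sqrt (T n) := by
    intro j n
    by_cases hne : e n = 0
    · simp only [hxpdef, if_pos hne, map_zero]
      exact mul_nonneg (inv_nonneg.mpr (hα0 j).le) (Real.sqrt_nonneg _)
    · obtain ⟨hcp, hdp, hTp⟩ := hpos' n hne
      simp only [hxpdef, if_neg hne]
      rw [map_smul_eq_mul, Complex.norm_real, Real.norm_eq_abs,
        abs_of_pos (div_pos (Real.sqrt_pos.mpr hTp) hcp)]
      calc Real.sqrt (T n) / c n * FE.P j (x n)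
          ≤ Real.sqrt (T n) / c n * ((α j)⁻¹ * c n) :=
            mul_le_mul_of_nonneg_left (hPc j n)
              (div_nonneg (Real.sqrt_nonneg _) hcp.le)
        _ = (α j)⁻¹ * Real.sqrt (T n) := by field_simp
  have hypb : ∀ j n, FF.P j (yp n) ≤ (α j)⁻¹ * (e n / Real.sqrt (T n)) := by
    intro j n
    by_cases hne : e n = 0
    · simp only [hypdef, if_pos hne, map_zero, hne, zero_div, mul_zero, le_refl]
    · obtain ⟨hcp, hdp, hTp⟩ := hpos' n hne
      have hsp : 0 < Real.sqrt (T n) := Real.sqrt_pos.mpr hTp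
      simp only [hypdef, if_neg hne]
      rw [map_smul_eq_mul, Complex.norm_real, Real.norm_eq_abs,
        abs_of_pos (div_pos hcp hsp)]
      calc c n / Real.sqrt (T n) * FF.P j (y n)
          ≤ c n / Real.sqrt (T n) * ((α j)⁻¹ * d n) :=
            mul_le_mul_of_nonneg_left (hQd j n) (div_nonneg hcp.le hsp.le)
        _ = (α j)⁻¹ * (c n * d n / Real.sqrt (T n)) := by field_simp
        _ ≤ (α j)⁻¹ * (e n / Real.sqrt (T n)) := by
            have hdd : c n * d n / Real.sqrt (T n) ≤ e n / Real.sqrt (T n) := by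
              gcongr
              exact hcde n
            exact mul_le_mul_of_nonneg_left hdd (inv_nonneg.mpr (hα0 j).le)
  have hsumyp : ∀ j N, ∑ n ∈ Finset.range N, FF.P j (yp n) ≤
      (α j)⁻¹ * (2 * Real.sqrt (T 0)) := by
    intro j N
    calc ∑ n ∈ Finset.range N, FF.P j (yp n)
        ≤ ∑ n ∈ Finset.range N, (α j)⁻¹ * (e n / Real.sqrt (T n)) :=
          Finset.sum_le_sum fun n _ => hypb j n
      _ = (α j)⁻¹ * ∑ n ∈ Finset.range N, e n / Real.sqrt (T n) := by rw [Finset.mul_sum]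
      _ ≤ (α j)⁻¹ * (2 * Real.sqrt (T 0)) :=
          mul_le_mul_of_nonneg_left (hsqrtsum N) (inv_nonneg.mpr (hα0 j).le)
  have hιeq : ∀ n, PT.ι (xp n) (yp n) = PT.ι (x n) (y n) := by
    intro n
    by_cases hne : e n = 0
    · rcases he_zero n hne with h | h
      · simp only [hxpdef, hypdef, if_pos hne, h, map_zero, LinearMap.zero_apply]
      · simp only [hxpdef, hypdef, if_pos hne, h, map_zero, LinearMap.zero_apply,
          LinearMap.map_zero]
    · obtain ⟨hcp, hdp, hTp⟩ := hpos' n hne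
      have hsp : 0 < Real.sqrt (T n) := Real.sqrt_pos.mpr hTp
      simp only [hxpdef, hypdef, if_neg hne]
      have houter : PT.ι (((Real.sqrt (T n) / c n : ℝ) : ℂ) • x n) =
          ((Real.sqrt (T n) / c n : ℝ) : ℂ) • PT.ι (x n) := map_smul PT.ι _ _
      rw [houter, LinearMap.smul_apply, map_smul, smul_smul, ← Complex.ofReal_mul]
      have h1 : Real.sqrt (T n) / c n * (c n / Real.sqrt (T n)) = 1 := by
        field_simp
      rw [h1]
      norm_num
  have htermeq : ∀ (φ : E →ₗ[ℂ] ℂ) (ψ : F →ₗ[ℂ] ℂ) (n : ℕ),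
      ψ (y n) * φ (x n) = φ (xp n) * ψ (yp n) := by
    intro φ ψ n
    by_cases hne : e n = 0
    · rcases he_zero n hne with h | h
      · simp [hxpdef, hypdef, if_pos hne, h]
      · simp [hxpdef, hypdef, if_pos hne, h]
    · obtain ⟨hcp, hdp, hTp⟩ := hpos' n hne
      have hsp : 0 < Real.sqrt (T n) := Real.sqrt_pos.mpr hTp
      simp only [hxpdef, hypdef, if_neg hne, map_smul, smul_eq_mul]
      have h1 : ((Real.sqrt (T n) / c n : ℝ) : ℂ) * ((c n / Real.sqrt (T n) : ℝ) : ℂ) = 1 := by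
        rw [← Complex.ofReal_mul]
        have : Real.sqrt (T n) / c n * (c n / Real.sqrt (T n)) = 1 := by field_simp
        rw [this]; norm_num
      calc ψ (y n) * φ (x n)
          = (((Real.sqrt (T n) / c n : ℝ) : ℂ) * ((c n / Real.sqrt (T n) : ℝ) : ℂ)) *
            (φ (x n) * ψ (y n)) := by rw [h1]; ring
        _ = ((Real.sqrt (T n) / c n : ℝ) : ℂ) * φ (x n) *
            (((c n / Real.sqrt (T n) : ℝ) : ℂ) * ψ (y n)) := by ring
  have hprecomp : IsPrecompactSem FE.P (Set.range xp) := by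
    intro ε hε s
    set m := s.sup id with hmdef
    have hPs : ∀ a ∈ s, ∀ v : E, FE.P a v ≤ FE.P m v := fun a ha v =>
      FE.mono' (Finset.le_sup (f := id) ha) v
    have hsqt : Tendsto (fun n => Real.sqrt (T n)) atTop (𝓝 0) := by
      have h1 := (Real.continuous_sqrt.tendsto 0).comp (tail_tendsto e)
      rw [Real.sqrt_zero] at h1
      exact h1
    have htt : Tendsto (fun n => (α m)⁻¹ * Real.sqrt (T n)) atTop (𝓝 0) := by
      simpa using hsqt.const_mul ((α m)⁻¹)
    obtain ⟨N, hN⟩ := Filter.eventually_atTop.mp (htt.eventually_lt_const hε)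
    refine ⟨(Finset.range N).image xp ∪ {0}, ?_⟩
    rintro v ⟨n, rfl⟩
    by_cases hn : n < N
    · refine ⟨xp n, Finset.mem_union_left _
        (Finset.mem_image_of_mem _ (Finset.mem_range.mpr hn)), fun a ha => ?_⟩
      simpa using hε
    · refine ⟨0, Finset.mem_union_right _ (Finset.mem_singleton_self 0), fun a ha => ?_⟩
      rw [sub_zero]
      exact lt_of_le_of_lt (le_trans (hPs a ha _) (hxpb m n)) (hN n (le_of_not_gt hn))
  -- conclusion via separation
  apply FG.sep
  intro k
  refine le_antisymm (le_of_forall_pos_le_add fun ε hε => ?_) (apply_nonneg _ _)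
  set D : ℝ := (α k)⁻¹ * (2 * Real.sqrt (T 0)) with hDdef
  have hD0 : 0 ≤ D := mul_nonneg (inv_nonneg.mpr (hα0 k).le) (by positivity)
  set ε' : ℝ := ε / (3 * (D + 1)) with hε'def
  have hε'pos : 0 < ε' := div_pos hε (by linarith)
  obtain ⟨S, hScont, hSfr, hSap⟩ := hAP LinearMap.id
    (fun β => ⟨{β}, 1, one_pos, fun v => by simp⟩) (Set.range xp) hprecomp ε' hε'pos {k}
  have hSx : ∀ n, FE.P k (xp n - S (xp n)) < ε' := by
    intro n
    have := hSap (xp n) ⟨n, rfl⟩ k (Finset.mem_singleton_self k)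
    simpa using this
  obtain ⟨r, eb, φ, Cφ, mφ, hdec, hCφ0, hφb⟩ := finrank_decomp FE S hScont hSfr
  set w : Fin r → ℕ → F := fun i N => ∑ n ∈ Finset.range N, φ i (xp n) • yp n with hwdef
  set Cφ' : ℝ := Cφ * ((α mφ)⁻¹ * Real.sqrt (T 0)) with hCφ'def
  have hφxb : ∀ (i : Fin r) (n : ℕ), ‖φ i (xp n)‖ ≤ Cφ' := by
    intro i n
    refine le_trans (hφb i (xp n)) ?_
    have h1 := hxpb mφ n
    have h2 : Real.sqrt (T n) ≤ Real.sqrt (T 0) := Real.sqrt_le_sqrt (hTanti0 n)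
    have h3 : FE.P mφ (xp n) ≤ (α mφ)⁻¹ * Real.sqrt (T 0) :=
      le_trans h1 (mul_le_mul_of_nonneg_left h2 (inv_nonneg.mpr (hα0 mφ).le))
    exact mul_le_mul_of_nonneg_left h3 hCφ0
  have hCφ'0 : 0 ≤ Cφ' :=
    mul_nonneg hCφ0 (mul_nonneg (inv_nonneg.mpr (hα0 mφ).le) (Real.sqrt_nonneg _))
  have hypsummable : ∀ j, Summable (fun n => FF.P j (yp n)) := fun j =>
    summable_of_sum_range_le (fun n => apply_nonneg _ _) (hsumyp j)
  -- limits of the partial sums w i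
  have hwlim : ∀ i : Fin r, ∃ z : F, ∀ j, Tendsto (fun N => FF.P j (w i N - z)) atTop (𝓝 0) := by
    intro i
    apply FF.complete
    intro j ε'' hε''
    have hsg : Summable (fun n => Cφ' * FF.P j (yp n)) := (hypsummable j).mul_left Cφ'
    have hps : CauchySeq (fun N => ∑ n ∈ Finset.range N, Cφ' * FF.P j (yp n)) :=
      (hsg.hasSum.tendsto_sum_nat).cauchySeq
    obtain ⟨N, hN⟩ := Metric.cauchySeq_iff.mp hps ε'' hε''
    refine ⟨N, ?_⟩
    have key : ∀ p q : ℕ, N ≤ p → N ≤ q → q ≤ p → FF.P j (w i p - w i q) < ε'' := by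
      intro p q hp hq hqp
      have hsub : w i p - w i q = ∑ n ∈ Finset.Ico q p, φ i (xp n) • yp n := by
        rw [Finset.sum_Ico_eq_sub _ hqp]
      rw [hsub]
      have h1 : FF.P j (∑ n ∈ Finset.Ico q p, φ i (xp n) • yp n) ≤
          ∑ n ∈ Finset.Ico q p, Cφ' * FF.P j (yp n) := by
        refine le_trans (seminorm_sum_le _ _ _) (Finset.sum_le_sum fun n _ => ?_)
        rw [map_smul_eq_mul]
        exact mul_le_mul_of_nonneg_right (hφxb i n) (apply_nonneg _ _)
      have h2 : ∑ n ∈ Finset.Ico q p, Cφ' * FF.P j (yp n) =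
          (∑ n ∈ Finset.range p, Cφ' * FF.P j (yp n)) -
          (∑ n ∈ Finset.range q, Cφ' * FF.P j (yp n)) :=
        Finset.sum_Ico_eq_sub _ hqp
      have h3 := hN p hp q hq
      rw [Real.dist_eq] at h3
      have h4 : (∑ n ∈ Finset.range p, Cφ' * FF.P j (yp n)) -
          (∑ n ∈ Finset.range q, Cφ' * FF.P j (yp n)) < ε'' := lt_of_le_of_lt (le_abs_self _) h3
      linarith [h1, h2 ▸ h4]
    intro a b ha hb
    rcases le_total b a with h | h
    · exact key a b ha hb h
    · have := key b a hb ha h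
      rwa [← map_neg_eq_map (FF.P j), neg_sub] at this
  choose z hzl using hwlim
  have hz0 : ∀ i, z i = 0 := by
    intro i
    apply sep_of_functionals FF
    intro ψ hψc
    have hv := hψ ψ hψc mφ
    have hφv : Tendsto (fun N => φ i (∑ n ∈ Finset.range N, ψ (y n) • x n)) atTop (𝓝 0) := by
      refine squeeze_zero_norm (fun N => hφb i _) ?_
      simpa using hv.const_mul Cφ
    have heq1 : ∀ N, φ i (∑ n ∈ Finset.range N, ψ (y n) • x n) = ψ (w i N) := by
      intro N
      rw [map_sum, map_sum]
      refine Finset.sum_congr rfl fun n _ => ?_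
      rw [map_smul, map_smul, smul_eq_mul, smul_eq_mul]
      exact htermeq (φ i) ψ n
    have hψw : Tendsto (fun N => ψ (w i N)) atTop (𝓝 0) := by
      simp only [heq1] at hφv
      exact hφv
    have hψw2 : Tendsto (fun N => ψ (w i N)) atTop (𝓝 (ψ (z i))) := by
      obtain ⟨sψ, Cψ, hCψ, hbψ⟩ := hψc ()
      have hbnd : ∀ N, ‖ψ (w i N) - ψ (z i)‖ ≤ Cψ * ∑ a ∈ sψ, FF.P a (w i N - z i) := by
        intro N
        rw [← map_sub]
        simpa using hbψ (w i N - z i)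
      have htnd : Tendsto (fun N => Cψ * ∑ a ∈ sψ, FF.P a (w i N - z i)) atTop (𝓝 0) := by
        have h1 := tendsto_finset_sum sψ (fun a _ => hzl i a)
        simpa using h1.const_mul Cψ
      have hdiff : Tendsto (fun N => ψ (w i N) - ψ (z i)) atTop (𝓝 0) :=
        squeeze_zero_norm hbnd htnd
      have := hdiff.add (tendsto_const_nhds (x := ψ (z i)))
      simpa using this
    exact tendsto_nhds_unique hψw2 hψw
  have hwk0 : ∀ i : Fin r, Tendsto (fun N => FF.P k (w i N)) atTop (𝓝 0) := by
    intro i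
    have h1 := hzl i k
    rw [hz0 i] at h1
    simpa using h1
  -- the decomposition of the partial sums in G
  have hmain : ∀ N, FG.P k (∑ n ∈ Finset.range N, PT.ι (x n) (y n)) ≤
      ε' * D + ∑ i, FE.P k (eb i) * FF.P k (w i N) := by
    intro N
    have hstep3 : ∑ n ∈ Finset.range N, PT.ι (S (xp n)) (yp n) =
        ∑ i, PT.ι (eb i) (w i N) := by
      have h1 : ∀ n, PT.ι (S (xp n)) (yp n) =
          ∑ i, φ i (xp n) • PT.ι (eb i) (yp n) := by
        intro n
        rw [hdec (xp n), map_sum, LinearMap.sum_apply]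
        refine Finset.sum_congr rfl fun i _ => ?_
        rw [map_smul, LinearMap.smul_apply]
      rw [Finset.sum_congr rfl fun n _ => h1 n, Finset.sum_comm]
      refine Finset.sum_congr rfl fun i _ => ?_
      rw [hwdef]
      rw [map_sum]
      refine Finset.sum_congr rfl fun n _ => ?_
      rw [map_smul]
    have hrw : ∑ n ∈ Finset.range N, PT.ι (x n) (y n) =
        (∑ n ∈ Finset.range N, PT.ι (xp n - S (xp n)) (yp n)) +
        ∑ i, PT.ι (eb i) (w i N) := by
      rw [← hstep3, ← Finset.sum_add_distrib]
      refine Finset.sum_congr rfl fun n _ => ?_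
      rw [← hιeq n]
      rw [map_sub, LinearMap.sub_apply]
      abel
    rw [hrw]
    refine le_trans (map_add_le_add _ _ _) (add_le_add ?_ ?_)
    · have hpb := projBound PT k N (fun j : Fin N => xp j - S (xp j)) (fun j : Fin N => yp j)
      rw [Fin.sum_univ_eq_sum_range (fun n => PT.ι (xp n - S (xp n)) (yp n)) N] at hpb
      rw [Fin.sum_univ_eq_sum_range (fun n => FE.P k (xp n - S (xp n)) * FF.P k (yp n)) N] at hpb
      refine le_trans hpb ?_
      calc ∑ n ∈ Finset.range N, FE.P k (xp n - S (xp n)) * FF.P k (yp n)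
          ≤ ∑ n ∈ Finset.range N, ε' * FF.P k (yp n) :=
            Finset.sum_le_sum fun n _ =>
              mul_le_mul_of_nonneg_right (hSx n).le (apply_nonneg _ _)
        _ = ε' * ∑ n ∈ Finset.range N, FF.P k (yp n) := by rw [Finset.mul_sum]
        _ ≤ ε' * D := mul_le_mul_of_nonneg_left (hsumyp k N) hε'pos.le
    · exact projBound PT k r eb (fun i => w i N)
  have h2 : Tendsto (fun N => ∑ i, FE.P k (eb i) * FF.P k (w i N)) atTop (𝓝 0) := by
    have h1 := tendsto_finset_sum (Finset.univ : Finset (Fin r))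
      (fun i _ => (hwk0 i).const_mul (FE.P k (eb i)))
    simpa using h1
  have h3 := (hu k).eventually_lt_const (show (0:ℝ) < ε/3 by linarith)
  have h4 := h2.eventually_lt_const (show (0:ℝ) < ε/3 by linarith)
  obtain ⟨N, hN3, hN4⟩ := (h3.and h4).exists
  have h5 : FG.P k u ≤ FG.P k (u - ∑ n ∈ Finset.range N, PT.ι (x n) (y n)) +
      FG.P k (∑ n ∈ Finset.range N, PT.ι (x n) (y n)) := by
    have := map_add_le_add (FG.P k)
      (u - ∑ n ∈ Finset.range N, PT.ι (x n) (y n))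
      (∑ n ∈ Finset.range N, PT.ι (x n) (y n))
    simpa using this
  have hεD : ε' * D ≤ ε / 3 := by
    rw [hε'def]
    rw [div_mul_eq_mul_div, div_le_div_iff₀ (by linarith) (by norm_num)]
    nlinarith [hε.le, hD0]
  have h6 := hmain N
  linarith


end
end
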